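/- Let p be a prime, a ≥ 1 an integer, and B a commutative ring with p^a·B = 0. Let B⁺ ⊆ B be a subring, let t ∈ B⁺ be an element which is invertible in B, let c ≥ 0 be an integer, and let φ : B → B be a ring endomorphism with φ(B⁺) ⊆ B⁺ + p·t^{-c}·B⁺. For an integer m ≥ 0, call an invertible N×N matrix X over B m-bounded if for every 0 ≤ i ≤ a all entries of p^{a−i}·X and of p^{a−i}·X^{-1} lie in t^{-m-ci}·B⁺. Then for every invertible matrix g over B all of whose entries, together with all entries of g^{-1}, lie in B⁺, and for every m-bounded X, the matrix g^{-1}·X·φ(g) is again m-bounded, where φ is applied to matrices entrywise. -/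

import Mathlib

noncomputable section

/-- `X` is `m`-bounded: `X` is invertible and for every `0 ≤ i ≤ a` all entries of
`p^{a−i}·X` and of `p^{a−i}·X⁻¹` lie in `t^{-m-ci}·B⁺ = tinv^{m+ci}·B⁺`. -/
def MBounded {B : Type*} [CommRing B] (Bp : Subring B) (tinv : B) (p a c : ℕ)
    {NN : ℕ} (m : ℕ) (X : Matrix (Fin NN) (Fin NN) B) : Prop :=
  IsUnit X ∧ ∀ i : ℕ, i ≤ a → ∀ r s,
    (∃ v ∈ Bp, (p : B) ^ (a - i) * X r s = tinv ^ (m + c * i) * v) ∧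
    (∃ v ∈ Bp, (p : B) ^ (a - i) * X⁻¹ r s = tinv ^ (m + c * i) * v)

theorem mb_sum {B : Type*} [CommRing B] (Bp : Subring B) (e : B) {ι : Type*}
    (s : Finset ι) (f : ι → B) (h : ∀ k ∈ s, ∃ v ∈ Bp, f k = e * v) :
    ∃ v ∈ Bp, ∑ k ∈ s, f k = e * v := by
  classical
  induction s using Finset.induction_on with
  | empty => exact ⟨0, zero_mem _, by simp⟩
  | @insert k s hks ih =>
    obtain ⟨v₁, hv₁, h₁⟩ := h _ (Finset.mem_insert_self _ _)
    obtain ⟨v₂, hv₂, h₂⟩ := ih (fun k hk => h k (Finset.mem_insert_of_mem hk))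
    exact ⟨v₁ + v₂, add_mem hv₁ hv₂, by rw [Finset.sum_insert hks, h₁, h₂, mul_add]⟩

theorem mb_aux {B : Type*} [CommRing B] (Bp : Subring B) (tinv : B) {p a c m : ℕ}
    (hpa : (p : B) ^ a = 0)
    (φ : B →+* B)
    (hφ : ∀ x ∈ Bp, ∃ y ∈ Bp, ∃ z ∈ Bp, φ x = y + (p : B) * tinv ^ c * z)
    (z : B) (hz : ∀ j, j ≤ a → ∃ v ∈ Bp, (p : B) ^ (a - j) * z = tinv ^ (m + c * j) * v)
    (i : ℕ) (hi : i ≤ a) (b x : B) (hb : b ∈ Bp) (hx : x ∈ Bp) :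
    ∃ v ∈ Bp, (p : B) ^ (a - i) * (b * z * φ x) = tinv ^ (m + c * i) * v := by
  obtain ⟨y, hy, w, hw, hφx⟩ := hφ x hx
  obtain ⟨v₁, hv₁, h₁⟩ := hz i hi
  obtain ⟨v₂, hv₂, h₂⟩ : ∃ v₂ ∈ Bp,
      (p : B) ^ (a - i) * ((p : B) * tinv ^ c * z) = tinv ^ (m + c * i) * v₂ := by
    cases i with
    | zero =>
      refine ⟨0, zero_mem _, ?_⟩
      have h0 : (p : B) ^ (a - 0) * (p : B) = 0 := by
        rw [Nat.sub_zero, hpa, zero_mul]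
      calc (p : B) ^ (a - 0) * ((p : B) * tinv ^ c * z)
          = ((p : B) ^ (a - 0) * (p : B)) * (tinv ^ c * z) := by ring
        _ = tinv ^ (m + c * 0) * 0 := by rw [h0]; ring
    | succ j =>
      obtain ⟨v₂, hv₂, h₂⟩ := hz j (Nat.le_of_succ_le hi)
      refine ⟨v₂, hv₂, ?_⟩
      have hp' : (p : B) ^ (a - j) = (p : B) ^ (a - (j + 1)) * p := by
        rw [← pow_succ]; congr 1; omega
      calc (p : B) ^ (a - (j + 1)) * ((p : B) * tinv ^ c * z)
          = tinv ^ c * ((p : B) ^ (a - j) * z) := by rw [hp']; ring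
        _ = tinv ^ c * (tinv ^ (m + c * j) * v₂) := by rw [h₂]
        _ = tinv ^ (m + c * (j + 1)) * v₂ := by
            rw [← mul_assoc, ← pow_add]; congr 2; ring
  refine ⟨b * y * v₁ + b * w * v₂,
    add_mem (mul_mem (mul_mem hb hy) hv₁) (mul_mem (mul_mem hb hw) hv₂), ?_⟩
  calc (p : B) ^ (a - i) * (b * z * φ x)
      = b * y * ((p : B) ^ (a - i) * z)
        + b * w * ((p : B) ^ (a - i) * ((p : B) * tinv ^ c * z)) := by rw [hφx]; ring
    _ = tinv ^ (m + c * i) * (b * y * v₁ + b * w * v₂) := by rw [h₁, h₂]; ring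

/-- the ring-theoretic content of Lemma 3.2.3(4) of the paper.
Let `p^a·B = 0`, `B⁺ ⊆ B` a subring, `t ∈ B⁺` invertible in `B` with inverse `tinv`,
`c ≥ 0`, and `φ : B → B` a ring endomorphism with `φ(B⁺) ⊆ B⁺ + p·t^{-c}·B⁺`.  Then for
every invertible matrix `g` with all entries of `g` and `g⁻¹` in `B⁺` and every
`m`-bounded `X`, the matrix `g⁻¹·X·φ(g)` is again `m`-bounded. -/
theorem mBounded_twisted_conj
    {p a : ℕ} (hp : p.Prime) (ha : 1 ≤ a)
    {B : Type*} [CommRing B] (hpa : (p : B) ^ a = 0)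
    (Bp : Subring B) (t tinv : B) (ht : t ∈ Bp) (htinv : t * tinv = 1)
    (c : ℕ) (φ : B →+* B)
    (hφ : ∀ x ∈ Bp, ∃ y ∈ Bp, ∃ z ∈ Bp, φ x = y + (p : B) * tinv ^ c * z)
    {NN : ℕ} (m : ℕ)
    (g : Matrix (Fin NN) (Fin NN) B) (hg : IsUnit g)
    (hg_ent : ∀ r s, g r s ∈ Bp) (hginv_ent : ∀ r s, g⁻¹ r s ∈ Bp)
    (X : Matrix (Fin NN) (Fin NN) B) (hX : MBounded Bp tinv p a c m X) :
    MBounded Bp tinv p a c m (g⁻¹ * X * g.map ⇑φ) := by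
  classical
  obtain ⟨hXunit, hXb⟩ := hX
  have hgdet : IsUnit g.det := (Matrix.isUnit_iff_isUnit_det g).mp hg
  have hgg : g * g⁻¹ = 1 := Matrix.mul_nonsing_inv g hgdet
  have hmap : g.map ⇑φ * g⁻¹.map ⇑φ = 1 := by
    rw [← Matrix.map_mul, hgg, Matrix.map_one ⇑φ (map_zero φ) (map_one φ)]
  have hmapdet : IsUnit (g.map ⇑φ).det := by
    have := congrArg Matrix.det hmap
    rw [Matrix.det_mul, Matrix.det_one] at this
    exact IsUnit.of_mul_eq_one _ this
  have hmapunit : IsUnit (g.map ⇑φ) := (Matrix.isUnit_iff_isUnit_det _).mpr hmapdet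
  have hmapinv : (g.map ⇑φ)⁻¹ = g⁻¹.map ⇑φ := Matrix.inv_eq_right_inv hmap
  have hginvdet : IsUnit g⁻¹.det := by
    have := congrArg Matrix.det (Matrix.nonsing_inv_mul g hgdet)
    rw [Matrix.det_mul, Matrix.det_one] at this
    exact IsUnit.of_mul_eq_one _ this
  have hginvunit : IsUnit g⁻¹ := (Matrix.isUnit_iff_isUnit_det _).mpr hginvdet
  have hYinv : (g⁻¹ * X * g.map ⇑φ)⁻¹ = g⁻¹.map ⇑φ * X⁻¹ * g := by
    rw [Matrix.mul_inv_rev, Matrix.mul_inv_rev, hmapinv,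
      Matrix.nonsing_inv_nonsing_inv g hgdet, ← mul_assoc]
  refine ⟨(hginvunit.mul hXunit).mul hmapunit, fun i hi r s => ?_⟩
  constructor
  · simp only [Matrix.mul_apply, Matrix.map_apply, Finset.sum_mul, Finset.mul_sum]
    refine mb_sum Bp _ _ _ (fun j _ => mb_sum Bp _ _ _ (fun k _ => ?_))
    exact mb_aux Bp tinv hpa φ hφ (X k j)
      (fun i' hi' => (hXb i' hi' k j).1) i hi (g⁻¹ r k) (g j s)
      (hginv_ent r k) (hg_ent j s)
  · rw [hYinv]
    simp only [Matrix.mul_apply, Matrix.map_apply, Finset.sum_mul, Finset.mul_sum]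
    refine mb_sum Bp _ _ _ (fun j _ => mb_sum Bp _ _ _ (fun k _ => ?_))
    obtain ⟨v, hv, hveq⟩ := mb_aux Bp tinv hpa φ hφ (X⁻¹ k j)
      (fun i' hi' => (hXb i' hi' k j).2) i hi (g j s) (g⁻¹ r k)
      (hg_ent j s) (hginv_ent r k)
    exact ⟨v, hv, by rw [← hveq]; ring⟩

end
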